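/- arXiv:2603.29284 — 3 statements merged into one kernel-verified Lean document; each statement's English description precedes it below -/
import Mathlib

section
/- Let q be a complex number with |q| < 1. Then ∏_{n=1}^∞ (1 − √2 qⁿ + q^{2n}) · ∏_{n=1}^∞ (1 + q^{2n}) · ∏_{n=1}^∞ (1 + √2 qⁿ + q^{2n}) = (q⁸;q⁸)_∞ / (q²;q²)_∞. -/
open Complex

lemma aux_summable_log (f : ℕ → ℂ) (hf : Summable f) (h1 : ∀ n, 1 + f n ≠ 0) :
    Summable fun n => Complex.log (1 + f n) := by
  apply Summable.of_norm_bounded_eventually (g := fun n => 3 / 2 * ‖f n‖) (hf.norm.mul_left _)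
  rw [Nat.cofinite_eq_atTop]
  filter_upwards [hf.tendsto_atTop_zero.eventually
    (Metric.ball_mem_nhds (0 : ℂ) (by norm_num : (0:ℝ) < 1/2))] with n hn
  have : ‖f n‖ ≤ 1 / 2 := by
    rw [dist_zero_right] at hn
    linarith
  exact Complex.norm_log_one_add_half_le_self this

lemma aux_mult (f : ℕ → ℂ) (hf : Summable f) (h1 : ∀ n, 1 + f n ≠ 0) :
    Multipliable fun n => 1 + f n :=
  Complex.multipliable_of_summable_log (f := fun n => 1 + f n)
    (aux_summable_log f hf h1)

lemma aux_ne (f : ℕ → ℂ) (hf : Summable f) (h1 : ∀ n, 1 + f n ≠ 0) :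
    (∏' n, (1 + f n)) ≠ 0 := by
  have := Complex.cexp_tsum_eq_tprod (f := fun n => 1 + f n) h1
    (aux_summable_log f hf h1)
  rw [← this]
  exact Complex.exp_ne_zero _

lemma one_add_ne {w : ℂ} (hw : ‖w‖ < 1) : 1 + w ≠ 0 := by
  intro h
  have : w = -1 := by linear_combination h
  rw [this] at hw
  simp at hw

lemma fac_ne {z c : ℂ} (hz : ‖z‖ < 1) (hc : c ^ 2 = 2) : 1 + c * z + z ^ 2 ≠ 0 := by
  intro h
  have h4 : z ^ 4 = -1 := by
    have key : (1 + c * z + z ^ 2) * (1 - c * z + z ^ 2) = 1 + z ^ 4 := by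
      linear_combination (-(z ^ 2)) * hc
    rw [h, zero_mul] at key
    linear_combination -key
  have h5 : ‖z‖ ^ 4 = 1 := by rw [← norm_pow, h4]; simp
  have := pow_lt_one₀ (norm_nonneg z) hz (by norm_num : (4:ℕ) ≠ 0)
  linarith

lemma sgeo {q : ℂ} (hq : ‖q‖ < 1) (k : ℕ) (hk : k ≠ 0) :
    Summable fun n : ℕ => q ^ (k * (n + 1)) := by
  have h1 : ‖q ^ k‖ < 1 := by
    rw [norm_pow]; exact pow_lt_one₀ (norm_nonneg _) hq hk
  apply ((summable_geometric_of_norm_lt_one h1).mul_left (q ^ k)).congr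
  intro n
  rw [← pow_succ', ← pow_mul]

theorem stmt_6 (q : ℂ) (hq : ‖q‖ < 1) :
    (∏' n : ℕ, (1 - (Real.sqrt 2 : ℂ) * q ^ (n + 1) + q ^ (2 * (n + 1)))) *
      (∏' n : ℕ, (1 + q ^ (2 * (n + 1)))) *
      (∏' n : ℕ, (1 + (Real.sqrt 2 : ℂ) * q ^ (n + 1) + q ^ (2 * (n + 1)))) =
    (∏' n : ℕ, (1 - q ^ (8 * (n + 1)))) / (∏' n : ℕ, (1 - q ^ (2 * (n + 1)))) := by
  have hq' : ‖q‖ < 1 := hq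
  have hc : ((Real.sqrt 2 : ℂ)) ^ 2 = 2 := by
    norm_cast
    exact Real.sq_sqrt (by norm_num)
  set c : ℂ := (Real.sqrt 2 : ℂ)
  -- summability
  have hs1 : Summable fun n : ℕ => q ^ (n + 1) := by
    have := sgeo hq' 1 one_ne_zero
    simpa using this
  have hs2 := sgeo hq' 2 (by norm_num)
  have hs4 := sgeo hq' 4 (by norm_num)
  have hs8 := sgeo hq' 8 (by norm_num)
  -- norms
  have hn1 : ∀ n : ℕ, ‖q ^ (n + 1)‖ < 1 := fun n => by
    rw [norm_pow]; exact pow_lt_one₀ (norm_nonneg q) hq' n.succ_ne_zero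
  have hnk : ∀ k n : ℕ, k ≠ 0 → ‖q ^ (k * (n + 1))‖ < 1 := fun k n hk => by
    rw [norm_pow]
    exact pow_lt_one₀ (norm_nonneg q) hq' (Nat.mul_ne_zero hk n.succ_ne_zero)
  have hpow2 : ∀ n : ℕ, q ^ (2 * (n + 1)) = (q ^ (n + 1)) ^ 2 := fun n => by
    rw [← pow_mul, Nat.mul_comm]
  -- nonvanishing of factors
  have hzm : ∀ n : ℕ, (1 : ℂ) + (-(c * q ^ (n + 1)) + q ^ (2 * (n + 1))) ≠ 0 := fun n => by
    have hcc : (-c) ^ 2 = 2 := by rw [neg_pow]; simpa using hc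
    have := fac_ne (hn1 n) hcc
    rw [hpow2 n]
    intro h; exact this (by linear_combination h)
  have hzp : ∀ n : ℕ, (1 : ℂ) + (c * q ^ (n + 1) + q ^ (2 * (n + 1))) ≠ 0 := fun n => by
    have := fac_ne (hn1 n) hc
    rw [hpow2 n]
    intro h; exact this (by linear_combination h)
  have hz2 : ∀ n : ℕ, (1 : ℂ) + q ^ (2 * (n + 1)) ≠ 0 := fun n => one_add_ne (hnk 2 n two_ne_zero)
  have hz4 : ∀ n : ℕ, (1 : ℂ) + q ^ (4 * (n + 1)) ≠ 0 := fun n =>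
    one_add_ne (hnk 4 n (by norm_num))
  have hzg : ∀ k : ℕ, k ≠ 0 → ∀ n : ℕ, (1 : ℂ) + -q ^ (k * (n + 1)) ≠ 0 := fun k hk n =>
    one_add_ne (by rw [norm_neg]; exact hnk k n hk)
  -- multipliability
  have Mm := aux_mult _ (((hs1.mul_left c).neg).add hs2) hzm
  have Mp := aux_mult _ ((hs1.mul_left c).add hs2) hzp
  have M2 := aux_mult _ hs2 hz2
  have M4 := aux_mult _ hs4 hz4
  have Mg2 := aux_mult _ hs2.neg (hzg 2 two_ne_zero)
  have Mg4 := aux_mult _ hs4.neg (hzg 4 (by norm_num))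
  -- nonvanishing of the denominator
  have hD : (∏' n : ℕ, ((1 : ℂ) + -q ^ (2 * (n + 1)))) ≠ 0 :=
    aux_ne _ hs2.neg (hzg 2 two_ne_zero)
  -- rewrite statement products into canonical `1 + f` form
  have eA : (∏' n : ℕ, (1 - c * q ^ (n + 1) + q ^ (2 * (n + 1)))) =
      ∏' n : ℕ, ((1 : ℂ) + (-(c * q ^ (n + 1)) + q ^ (2 * (n + 1)))) :=
    tprod_congr fun n => by ring
  have eC : (∏' n : ℕ, (1 + c * q ^ (n + 1) + q ^ (2 * (n + 1)))) =
      ∏' n : ℕ, ((1 : ℂ) + (c * q ^ (n + 1) + q ^ (2 * (n + 1)))) :=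
    tprod_congr fun n => by ring
  have eD : (∏' n : ℕ, ((1 : ℂ) - q ^ (2 * (n + 1)))) =
      ∏' n : ℕ, ((1 : ℂ) + -q ^ (2 * (n + 1))) :=
    tprod_congr fun n => by ring
  have eN : (∏' n : ℕ, ((1 : ℂ) - q ^ (8 * (n + 1)))) =
      ∏' n : ℕ, ((1 : ℂ) + -q ^ (8 * (n + 1))) :=
    tprod_congr fun n => by ring
  rw [eA, eC, eD, eN]
  -- combine products
  have step1 : (∏' n : ℕ, ((1 : ℂ) + (-(c * q ^ (n + 1)) + q ^ (2 * (n + 1))))) *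
      (∏' n : ℕ, ((1 : ℂ) + (c * q ^ (n + 1) + q ^ (2 * (n + 1))))) =
      ∏' n : ℕ, ((1 : ℂ) + q ^ (4 * (n + 1))) := by
    rw [← Multipliable.tprod_mul Mm Mp]
    refine tprod_congr fun n => ?_
    have h2 := hpow2 n
    have h4 : q ^ (4 * (n + 1)) = (q ^ (n + 1)) ^ 4 := by rw [← pow_mul, Nat.mul_comm]
    rw [h2, h4]
    linear_combination (-((q ^ (n + 1)) ^ 2)) * hc
  have step2 : (∏' n : ℕ, ((1 : ℂ) + q ^ (2 * (n + 1)))) *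
      (∏' n : ℕ, ((1 : ℂ) + -q ^ (2 * (n + 1)))) =
      ∏' n : ℕ, ((1 : ℂ) + -q ^ (4 * (n + 1))) := by
    rw [← Multipliable.tprod_mul M2 Mg2]
    refine tprod_congr fun n => ?_
    have h4 : q ^ (4 * (n + 1)) = (q ^ (2 * (n + 1))) ^ 2 := by
      rw [← pow_mul]; ring_nf
    rw [h4]; ring
  have step3 : (∏' n : ℕ, ((1 : ℂ) + q ^ (4 * (n + 1)))) *
      (∏' n : ℕ, ((1 : ℂ) + -q ^ (4 * (n + 1)))) =
      ∏' n : ℕ, ((1 : ℂ) + -q ^ (8 * (n + 1))) := by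
    rw [← Multipliable.tprod_mul M4 Mg4]
    refine tprod_congr fun n => ?_
    have h8 : q ^ (8 * (n + 1)) = (q ^ (4 * (n + 1))) ^ 2 := by
      rw [← pow_mul]; ring_nf
    rw [h8]; ring
  rw [eq_div_iff hD]
  calc (∏' n : ℕ, ((1 : ℂ) + (-(c * q ^ (n + 1)) + q ^ (2 * (n + 1))))) *
        (∏' n : ℕ, ((1 : ℂ) + q ^ (2 * (n + 1)))) *
        (∏' n : ℕ, ((1 : ℂ) + (c * q ^ (n + 1) + q ^ (2 * (n + 1))))) *
        (∏' n : ℕ, ((1 : ℂ) + -q ^ (2 * (n + 1))))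
      = ((∏' n : ℕ, ((1 : ℂ) + (-(c * q ^ (n + 1)) + q ^ (2 * (n + 1))))) *
        (∏' n : ℕ, ((1 : ℂ) + (c * q ^ (n + 1) + q ^ (2 * (n + 1)))))) *
        ((∏' n : ℕ, ((1 : ℂ) + q ^ (2 * (n + 1)))) *
        (∏' n : ℕ, ((1 : ℂ) + -q ^ (2 * (n + 1))))) := by ring
    _ = ∏' n : ℕ, ((1 : ℂ) + -q ^ (8 * (n + 1))) := by rw [step1, step2, step3]
end

section
/- Let q be a complex number with |q| < 1. Then (1 + √2) ∏_{n=1}^∞ (1 + √2 qⁿ + q^{2n}) − (1 − √2) ∏_{n=1}^∞ (1 − √2 qⁿ + q^{2n}) = 2√2 · ( ∑_{j=-∞}^∞ (−1)^j q^{8j²−2j} ) / (q;q)_∞. -/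
open Filter Finset

namespace JT8

noncomputable def gbz (q : ℂ) : ℕ → ℤ → ℂ
  | 0, k => if k = 0 then 1 else 0
  | m+1, k => q ^ k * gbz q m k + gbz q m (k-1)

def tri (j : ℤ) : ℤ := j * (j + 1) / 2

lemma tri_two (j : ℤ) : 2 * tri j = j * (j + 1) :=
  Int.mul_ediv_cancel' (Int.even_mul_succ_self j).two_dvd

lemma tri_succ (j : ℤ) : tri (j + 1) = tri j + (j + 1) := by
  have h : 2 * tri (j + 1) = 2 * (tri j + (j + 1)) := by
    linear_combination tri_two (j+1) - tri_two j
  exact mul_left_cancel₀ two_ne_zero h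

lemma tri_pred (j : ℤ) : tri (j - 1) = tri j - j := by
  have := tri_succ (j - 1); simp at this; linarith

lemma tri_zero : tri 0 = 0 := by decide

lemma gbz_P2 (q : ℂ) (m : ℕ) (k : ℤ) :
    gbz q (m+1) k = q ^ k * gbz q m k + gbz q m (k-1) := rfl

lemma gbz_neg (q : ℂ) (m : ℕ) : ∀ k : ℤ, k < 0 → gbz q m k = 0 := by
  induction m with
  | zero => intro k hk; simp [gbz, hk.ne]
  | succ m ih =>
    intro k hk
    rw [gbz_P2, ih k hk, ih (k-1) (by omega)]
    ring

lemma gbz_gt (q : ℂ) (m : ℕ) : ∀ k : ℤ, (m : ℤ) < k → gbz q m k = 0 := by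
  induction m with
  | zero => intro k hk; simp [gbz]; omega
  | succ m ih =>
    intro k hk
    rw [gbz_P2, ih k (by push_cast at hk ⊢; omega), ih (k-1) (by push_cast at hk ⊢; omega)]
    ring

lemma gbz_P1 (q : ℂ) (hq0 : q ≠ 0) (m : ℕ) :
    ∀ k : ℤ, gbz q (m+1) k = gbz q m k + q ^ ((m : ℤ) + 1 - k) * gbz q m (k-1) := by
  induction m with
  | zero =>
    intro k
    rcases eq_or_ne k 0 with rfl | h0
    · norm_num [gbz]
    rcases eq_or_ne k 1 with rfl | h1
    · norm_num [gbz]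
    · have h1' : k - 1 ≠ 0 := by omega
      simp [gbz, h0, h1']
  | succ m ih =>
    intro k
    have hL : gbz q (m+1+1) k = q ^ k * (gbz q m k + q ^ ((m : ℤ) + 1 - k) * gbz q m (k-1))
        + (gbz q m (k-1) + q ^ ((m : ℤ) + 1 - (k-1)) * gbz q m (k-1-1)) := by
      rw [gbz_P2 q (m+1) k, ih k, ih (k-1)]
    rw [hL, gbz_P2 q m k, gbz_P2 q m (k-1)]
    push_cast
    have hk : q ^ (k : ℤ) ≠ 0 := zpow_ne_zero _ hq0
    simp only [zpow_sub₀ hq0, zpow_add₀ hq0, zpow_one]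
    field_simp
    ring

lemma gbz_C (q : ℂ) (hq0 : q ≠ 0) (m : ℕ) (k : ℤ) :
    gbz q (m+2) k = q ^ k * gbz q m k + (1 + q ^ ((m : ℤ) + 1)) * gbz q m (k-1)
      + q ^ ((m : ℤ) + 2 - k) * gbz q m (k-2) := by
  have e := gbz_P1 q hq0 (m+1) k
  push_cast at e
  rw [show (m:ℕ)+1+1 = m+2 from rfl] at e
  rw [show ((m:ℤ) + 1 + 1 - k) = (m:ℤ) + 2 - k by ring] at e
  rw [e, gbz_P2 q m k, gbz_P2 q m (k-1)]
  rw [show (k - 1 - 1 : ℤ) = k - 2 by ring]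
  have hpow : q ^ ((m:ℤ) + 2 - k) * q ^ (k - 1) = q ^ ((m:ℤ) + 1) := by
    rw [← zpow_add₀ hq0]; congr 1; ring
  linear_combination gbz q m (k-1) * hpow

noncomputable def SS (q z : ℂ) (N : ℕ) : ℂ :=
  ∑' j : ℤ, gbz q (2*N) ((N:ℤ)+j) * q ^ (tri j) * z ^ j

lemma gbz_out (q : ℂ) (M : ℕ) (c j : ℤ) (h : j < -c ∨ ((M:ℤ) - c) < j) :
    gbz q M (c+j) = 0 := by
  rcases h with h | h
  · exact gbz_neg q M _ (by omega)
  · exact gbz_gt q M _ (by omega)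

lemma summable_gbz (q : ℂ) (M : ℕ) (c : ℤ) (u v : ℤ → ℂ) :
    Summable (fun j : ℤ => u j * gbz q M (c+j) * v j) := by
  apply summable_of_ne_finset_zero (s := Finset.Icc (-c) ((M:ℤ)-c))
  intro j hj
  rw [Finset.mem_Icc] at hj
  rw [gbz_out q M c j (by omega), mul_zero, zero_mul]

lemma SS_succ (q z : ℂ) (hq0 : q ≠ 0) (hz0 : z ≠ 0) (N : ℕ) :
    SS q z (N+1) = SS q z N * ((1 + z * q ^ ((N:ℤ)+1)) * (1 + z⁻¹ * q ^ ((N:ℤ)))) := by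
  have key : ∀ j : ℤ, gbz q (2*(N+1)) (((N+1:ℕ):ℤ)+j) * q ^ (tri j) * z ^ j
      = (q ^ ((N:ℤ)+1+j) * gbz q (2*N) (((N:ℤ)+1)+j) * (q ^ (tri j) * z ^ j))
      + ((1 + q ^ (2*(N:ℤ)+1)) * gbz q (2*N) ((N:ℤ)+j) * (q ^ (tri j) * z ^ j))
      + (q ^ ((N:ℤ)+1-j) * gbz q (2*N) (((N:ℤ)-1)+j) * (q ^ (tri j) * z ^ j)) := by
    intro j
    have e := gbz_C q hq0 (2*N) ((N:ℤ)+1+j)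
    push_cast at e ⊢
    rw [show ((N:ℤ)+1+j-1) = (N:ℤ)+j by ring, show ((N:ℤ)+1+j-2) = (N:ℤ)-1+j by ring,
      show (2*(N:ℤ)+2-((N:ℤ)+1+j)) = (N:ℤ)+1-j by ring] at e
    rw [show 2*(N+1) = 2*N+2 from rfl, show ((N:ℤ)+1+j) = ((N:ℤ)+1)+j from rfl, e]
    ring
  have hA : Summable (fun j : ℤ =>
      q ^ ((N:ℤ)+1+j) * gbz q (2*N) (((N:ℤ)+1)+j) * (q ^ (tri j) * z ^ j)) :=
    summable_gbz q (2*N) ((N:ℤ)+1) _ _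
  have hB : Summable (fun j : ℤ =>
      (1 + q ^ (2*(N:ℤ)+1)) * gbz q (2*N) ((N:ℤ)+j) * (q ^ (tri j) * z ^ j)) :=
    summable_gbz q (2*N) ((N:ℤ)) _ _
  have hC : Summable (fun j : ℤ =>
      q ^ ((N:ℤ)+1-j) * gbz q (2*N) (((N:ℤ)-1)+j) * (q ^ (tri j) * z ^ j)) :=
    summable_gbz q (2*N) ((N:ℤ)-1) (fun j => q ^ ((N:ℤ)+1-j)) (fun j => q ^ (tri j) * z ^ j)
  have split : SS q z (N+1)
      = (∑' j : ℤ, q ^ ((N:ℤ)+1+j) * gbz q (2*N) (((N:ℤ)+1)+j) * (q ^ (tri j) * z ^ j))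
      + (∑' j : ℤ, (1 + q ^ (2*(N:ℤ)+1)) * gbz q (2*N) ((N:ℤ)+j) * (q ^ (tri j) * z ^ j))
      + (∑' j : ℤ, q ^ ((N:ℤ)+1-j) * gbz q (2*N) (((N:ℤ)-1)+j) * (q ^ (tri j) * z ^ j)) := by
    rw [SS, tsum_congr key, Summable.tsum_add (hA.add hB) hC, Summable.tsum_add hA hB]
  -- middle term
  have eB : (∑' j : ℤ, (1 + q ^ (2*(N:ℤ)+1)) * gbz q (2*N) ((N:ℤ)+j) * (q ^ (tri j) * z ^ j))
      = (1 + q ^ (2*(N:ℤ)+1)) * SS q z N := by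
    rw [SS, ← tsum_mul_left]
    exact tsum_congr fun j => by ring
  -- first term
  have eA : (∑' j : ℤ, q ^ ((N:ℤ)+1+j) * gbz q (2*N) (((N:ℤ)+1)+j) * (q ^ (tri j) * z ^ j))
      = q ^ ((N:ℤ)) * z⁻¹ * SS q z N := by
    have hpt : ∀ j : ℤ,
        q ^ ((N:ℤ)+1+(j-1)) * gbz q (2*N) (((N:ℤ)+1)+(j-1)) * (q ^ (tri (j-1)) * z ^ (j-1))
        = q ^ ((N:ℤ)) * z⁻¹ * (gbz q (2*N) ((N:ℤ)+j) * q ^ (tri j) * z ^ j) := by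
      intro j
      have h1 : q ^ ((N:ℤ)+j) * q ^ (tri j - j) = q ^ ((N:ℤ)) * q ^ (tri j) := by
        rw [← zpow_add₀ hq0, ← zpow_add₀ hq0]; congr 1; ring
      rw [show ((N:ℤ)+1)+(j-1) = (N:ℤ)+j by ring, tri_pred, zpow_sub_one₀ hz0]
      linear_combination gbz q (2*N) ((N:ℤ)+j) * z ^ j * z⁻¹ * h1
    rw [SS, ← tsum_mul_left,
      ← Equiv.tsum_eq (Equiv.subRight (1:ℤ)) (fun j => q ^ ((N:ℤ)+1+j) * gbz q (2*N) (((N:ℤ)+1)+j) * (q ^ (tri j) * z ^ j))]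
    exact tsum_congr fun j => hpt j
  -- last term
  have eC : (∑' j : ℤ, q ^ ((N:ℤ)+1-j) * gbz q (2*N) (((N:ℤ)-1)+j) * (q ^ (tri j) * z ^ j))
      = q ^ ((N:ℤ)+1) * z * SS q z N := by
    have hpt : ∀ j : ℤ,
        q ^ ((N:ℤ)+1-(j+1)) * gbz q (2*N) (((N:ℤ)-1)+(j+1)) * (q ^ (tri (j+1)) * z ^ (j+1))
        = q ^ ((N:ℤ)+1) * z * (gbz q (2*N) ((N:ℤ)+j) * q ^ (tri j) * z ^ j) := by
      intro j
      have h1 : q ^ ((N:ℤ)-j) * q ^ (tri j + (j+1)) = q ^ ((N:ℤ)+1) * q ^ (tri j) := by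
        rw [← zpow_add₀ hq0, ← zpow_add₀ hq0]; congr 1; ring
      rw [show ((N:ℤ)+1-(j+1)) = (N:ℤ)-j by ring, show ((N:ℤ)-1)+(j+1) = (N:ℤ)+j by ring, tri_succ, zpow_add_one₀ hz0]
      linear_combination gbz q (2*N) ((N:ℤ)+j) * z ^ j * z * h1
    rw [SS, ← tsum_mul_left,
      ← Equiv.tsum_eq (Equiv.addRight (1:ℤ)) (fun j => q ^ ((N:ℤ)+1-j) * gbz q (2*N) (((N:ℤ)-1)+j) * (q ^ (tri j) * z ^ j))]
    exact tsum_congr fun j => hpt j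
  rw [split, eA, eB, eC]
  have h3 : z * z⁻¹ * (q ^ ((N:ℤ)+1) * q ^ ((N:ℤ))) = q ^ (2*(N:ℤ)+1) := by
    rw [mul_inv_cancel₀ hz0, one_mul, ← zpow_add₀ hq0]; congr 1; ring
  linear_combination (-(SS q z N)) * h3

lemma jtp_fin (q z : ℂ) (hq0 : q ≠ 0) (hz0 : z ≠ 0) (N : ℕ) :
    ∏ n ∈ range N, ((1 + z * q ^ ((n:ℤ)+1)) * (1 + z⁻¹ * q ^ ((n:ℤ)))) = SS q z N := by
  induction N with
  | zero =>
    rw [prod_range_zero, SS]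
    rw [tsum_eq_single 0 (fun j hj => by
      rw [gbz_out q (2*0) _ j (by push_cast; omega), zero_mul, zero_mul])]
    norm_num [tri_zero]
    simp [gbz]
  | succ N ih =>
    rw [prod_range_succ, ih, SS_succ q z hq0 hz0 N]
noncomputable def Pp (q : ℂ) (n : ℕ) : ℂ := ∏ i ∈ range n, (1 - q^(i+1))

lemma Pp_zero (q : ℂ) : Pp q 0 = 1 := prod_range_zero _

lemma Pp_succ (q : ℂ) (n : ℕ) : Pp q (n+1) = Pp q n * (1 - q^(n+1)) := prod_range_succ _ _

lemma fac_ne (q : ℂ) (hq1 : ‖q‖ < 1) (i : ℕ) : (1 : ℂ) - q^(i+1) ≠ 0 := by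
  intro h
  have h2 : q^(i+1) = 1 := by linear_combination -h
  have h3 : ‖q^(i+1)‖ < 1 := by
    rw [norm_pow]
    exact pow_lt_one₀ (norm_nonneg q) hq1 (Nat.succ_ne_zero i)
  rw [h2, norm_one] at h3
  exact lt_irrefl _ h3

lemma Pp_ne (q : ℂ) (hq1 : ‖q‖ < 1) (n : ℕ) : Pp q n ≠ 0 :=
  prod_ne_zero_iff.mpr fun i _ => fac_ne q hq1 i

lemma gbz_formula (q : ℂ) (hq1 : ‖q‖ < 1) :
    ∀ m k : ℕ, k ≤ m → gbz q m (k : ℤ) = Pp q m * (Pp q k)⁻¹ * (Pp q (m-k))⁻¹ := by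
  intro m
  induction m with
  | zero =>
    intro k hk
    interval_cases k
    simp [gbz, Pp]
  | succ m ih =>
    intro k hk
    cases k with
    | zero =>
      have h0 := ih 0 (Nat.zero_le m)
      push_cast at h0
      rw [show ((0:ℕ):ℤ) = 0 from rfl, gbz_P2, gbz_neg q m (0-1) (by omega), h0]
      simp [Pp_ne q hq1, Pp_zero]
    | succ k' =>
      have e : gbz q (m+1) ((k'+1:ℕ):ℤ)
          = q^((k'+1:ℕ):ℤ) * gbz q m ((k'+1:ℕ):ℤ) + gbz q m ((k':ℕ):ℤ) := by
        rw [gbz_P2]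
        congr 2
        push_cast; ring
      rcases Nat.lt_or_ge m (k'+1) with hm | hm
      · -- k'+1 = m+1
        have hk'm : k' = m := by omega
        rw [e, gbz_gt q m _ (by push_cast; omega), ih k' (by omega), hk'm]
        norm_num [Pp_zero]
        field_simp [Pp_ne q hq1]
      · -- k'+1 ≤ m
        rw [e, ih (k'+1) hm, ih k' (by omega)]
        obtain ⟨a, ha⟩ : ∃ a, m - (k'+1) = a := ⟨m - (k'+1), rfl⟩
        have hma : m = k' + 1 + a := by omega
        have h1 : m - k' = a + 1 := by omega
        have h2 : m + 1 - (k'+1) = a + 1 := by omega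
        rw [ha, h1, h2, zpow_natCast, Pp_succ q a, Pp_succ q m, Pp_succ q k']
        have hq' : q ^ (m+1) = q^(k'+1) * q^(a+1) := by
          rw [← pow_add]; congr 1; omega
        rw [hq']
        field_simp [Pp_ne q hq1, fac_ne q hq1]
        ring

-- bounds
noncomputable def Lq (r : ℝ) : ℝ := ∑' i : ℕ, Real.log (1 - r^(i+1))
noncomputable def bq (r : ℝ) : ℝ := Real.exp (Lq r)
noncomputable def Bq (r : ℝ) : ℝ := Real.exp (r * (1-r)⁻¹)

lemma log_lb {x : ℝ} (h0 : 0 ≤ x) (h2 : x ≤ 1/2) : -(2*x) ≤ Real.log (1-x) := by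
  rw [Real.le_log_iff_exp_le (by linarith)]
  rw [show -(2*x) = -(2*x) from rfl, Real.exp_neg]
  have h3 := Real.add_one_le_exp (2*x)
  have h4 := Real.exp_pos (2*x)
  rw [inv_le_iff_one_le_mul₀ h4]
  nlinarith

lemma summable_log (r : ℝ) (hr0 : 0 ≤ r) (hr1 : r < 1) :
    Summable (fun i : ℕ => Real.log (1 - r^(i+1))) := by
  apply Summable.of_norm_bounded_eventually_nat (g := fun i => 2 * r^(i+1))
  · exact ((summable_geometric_of_lt_one hr0 hr1).mul_left (2*r)).congr
      (fun i => by rw [pow_succ]; ring)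
  · have ht : Tendsto (fun i : ℕ => r^(i+1)) atTop (nhds 0) :=
      (tendsto_pow_atTop_nhds_zero_of_lt_one hr0 hr1).comp (tendsto_add_atTop_nat 1)
    filter_upwards [ht.eventually_le_const (by norm_num : (0:ℝ) < 1/2)] with i hi
    have hp0 : (0:ℝ) ≤ r^(i+1) := pow_nonneg hr0 _
    have := log_lb hp0 hi
    have hlog0 : Real.log (1 - r^(i+1)) ≤ 0 :=
      Real.log_nonpos (by linarith) (by linarith)
    rw [Real.norm_eq_abs, abs_of_nonpos hlog0]
    linarith
lemma r_facts (q : ℂ) (hq1 : ‖q‖ < 1) (i : ℕ) :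
    0 ≤ ‖q‖^(i+1) ∧ ‖q‖^(i+1) < 1 ∧ (0:ℝ) < 1 - ‖q‖^(i+1) := by
  have h0 : (0:ℝ) ≤ ‖q‖ := norm_nonneg q
  have h1 : ‖q‖^(i+1) < 1 := pow_lt_one₀ h0 hq1 (Nat.succ_ne_zero i)
  exact ⟨pow_nonneg h0 _, h1, by linarith⟩

lemma sum_pow_le (q : ℂ) (hq1 : ‖q‖ < 1) (n : ℕ) :
    ∑ i ∈ range n, ‖q‖^(i+1) ≤ ‖q‖ * (1-‖q‖)⁻¹ := by
  have h0 : (0:ℝ) ≤ ‖q‖ := norm_nonneg q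
  have hsum : Summable (fun i : ℕ => ‖q‖^(i+1)) :=
    ((summable_geometric_of_lt_one h0 hq1).mul_right ‖q‖).congr (fun i => (pow_succ ‖q‖ i).symm)
  have h1 : ∑ i ∈ range n, ‖q‖^(i+1) ≤ ∑' i : ℕ, ‖q‖^(i+1) :=
    Summable.sum_le_tsum (range n) (fun i _ => pow_nonneg h0 _) hsum
  have h2 : ∑' i : ℕ, ‖q‖^(i+1) = ‖q‖ * (1-‖q‖)⁻¹ := by
    calc ∑' i : ℕ, ‖q‖^(i+1) = ∑' i : ℕ, ‖q‖^i * ‖q‖ := by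
          exact tsum_congr fun i => pow_succ ‖q‖ i
      _ = (∑' i : ℕ, ‖q‖^i) * ‖q‖ := tsum_mul_right
      _ = ‖q‖ * (1-‖q‖)⁻¹ := by rw [tsum_geometric_of_lt_one h0 hq1]; ring
  linarith

lemma Pp_le (q : ℂ) (hq1 : ‖q‖ < 1) (n : ℕ) : ‖Pp q n‖ ≤ Bq ‖q‖ := by
  rw [Pp, norm_prod]
  calc ∏ i ∈ range n, ‖1 - q^(i+1)‖ ≤ ∏ i ∈ range n, (1 + ‖q‖^(i+1)) := by
        apply prod_le_prod (fun i _ => norm_nonneg _)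
        intro i _
        calc ‖1 - q^(i+1)‖ ≤ ‖(1:ℂ)‖ + ‖q^(i+1)‖ := norm_sub_le _ _
          _ = 1 + ‖q‖^(i+1) := by rw [norm_one, norm_pow]
    _ ≤ ∏ i ∈ range n, Real.exp (‖q‖^(i+1)) := by
        apply prod_le_prod (fun i _ => by positivity)
        intro i _
        have := Real.add_one_le_exp (‖q‖^(i+1))
        linarith
    _ = Real.exp (∑ i ∈ range n, ‖q‖^(i+1)) := (Real.exp_sum _ _).symm
    _ ≤ Bq ‖q‖ := Real.exp_le_exp.mpr (sum_pow_le q hq1 n)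

lemma Pp_ge (q : ℂ) (hq1 : ‖q‖ < 1) (n : ℕ) : bq ‖q‖ ≤ ‖Pp q n‖ := by
  have h0 : (0:ℝ) ≤ ‖q‖ := norm_nonneg q
  have hsl := summable_log ‖q‖ h0 hq1
  have step1 : Lq ‖q‖ ≤ ∑ i ∈ range n, Real.log (1 - ‖q‖^(i+1)) := by
    have hsplit := Summable.sum_add_tsum_nat_add n hsl
    have htail : ∑' i : ℕ, Real.log (1 - ‖q‖^(i+n+1)) ≤ 0 := by
      apply tsum_nonpos
      intro i
      have hf := r_facts q hq1 (i+n)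
      exact Real.log_nonpos (by linarith [hf.2.2]) (by linarith [hf.1, hf.2.1])
    rw [Lq, ← hsplit]
    simpa using htail
  have step2 : Real.exp (∑ i ∈ range n, Real.log (1 - ‖q‖^(i+1)))
      = ∏ i ∈ range n, (1 - ‖q‖^(i+1)) := by
    rw [Real.exp_sum]
    exact prod_congr rfl fun i _ => Real.exp_log (r_facts q hq1 i).2.2
  have step3 : ∏ i ∈ range n, (1 - ‖q‖^(i+1)) ≤ ‖Pp q n‖ := by
    rw [Pp, norm_prod]
    apply prod_le_prod (fun i _ => le_of_lt (r_facts q hq1 i).2.2)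
    intro i _
    have := norm_sub_norm_le (1:ℂ) (q^(i+1))
    rw [norm_one, norm_pow] at this
    linarith
  calc bq ‖q‖ ≤ Real.exp (∑ i ∈ range n, Real.log (1 - ‖q‖^(i+1))) :=
        Real.exp_le_exp.mpr step1
    _ = _ := step2
    _ ≤ _ := step3

noncomputable def Mb (r : ℝ) : ℝ := Bq r * ((bq r)⁻¹ * (bq r)⁻¹)

lemma Mb_pos (r : ℝ) : 0 < Mb r := by
  rw [Mb, Bq, bq]; positivity

lemma gbz_bound (q : ℂ) (hq1 : ‖q‖ < 1) (m : ℕ) (k : ℤ) :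
    ‖gbz q m k‖ ≤ Mb ‖q‖ := by
  rcases lt_or_ge k 0 with hk | hk
  · rw [gbz_neg q m k hk, norm_zero]; exact (Mb_pos _).le
  rcases lt_or_ge ((m:ℤ)) k with hk2 | hk2
  · rw [gbz_gt q m k hk2, norm_zero]; exact (Mb_pos _).le
  · obtain ⟨k', rfl⟩ : ∃ k' : ℕ, k = (k' : ℤ) := ⟨k.toNat, (Int.toNat_of_nonneg hk).symm⟩
    rw [gbz_formula q hq1 m k' (by omega)]
    rw [norm_mul, norm_mul, norm_inv, norm_inv, Mb]
    have hb : 0 < bq ‖q‖ := Real.exp_pos _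
    rw [mul_assoc]
    have hB : (0:ℝ) < Bq ‖q‖ := Real.exp_pos _
    apply mul_le_mul (Pp_le q hq1 m) ?_ (by positivity) hB.le
    apply mul_le_mul ?_ ?_ (by positivity) (inv_nonneg.mpr hb.le)
    · exact inv_anti₀ hb (Pp_ge q hq1 k')
    · exact inv_anti₀ hb (Pp_ge q hq1 (m - k'))

lemma int_quad_nonneg (j : ℤ) : 0 ≤ (j+1)*(j+2) := by
  rcases le_or_gt j (-2) with h | h
  · exact mul_nonneg_iff.mpr (Or.inr ⟨by omega, by omega⟩)
  · exact mul_nonneg (by omega) (by omega)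

lemma tri_lb (j : ℤ) : |j| - 1 ≤ tri j := by
  have h2 := tri_two j
  rcases abs_cases j with ⟨h, _⟩ | ⟨h, _⟩
  · rw [h]
    nlinarith [mul_self_nonneg (j-1)]
  · rw [h]
    nlinarith [int_quad_nonneg j]

lemma summable_zgeo (r : ℝ) (hr0 : 0 < r) (hr1 : r < 1) (e : ℤ → ℤ)
    (he : ∀ j, |j| - 1 ≤ e j) : Summable (fun j : ℤ => r ^ (e j)) := by
  have habs : Summable (fun j : ℤ => r⁻¹ * r ^ |j|) := by
    apply Summable.mul_left
    apply Summable.of_nat_of_neg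
    · exact (summable_geometric_of_lt_one hr0.le hr1).congr
        (fun n => by rw [Nat.abs_cast, zpow_natCast])
    · exact (summable_geometric_of_lt_one hr0.le hr1).congr
        (fun n => by rw [abs_neg, Nat.abs_cast, zpow_natCast])
  apply Summable.of_norm_bounded habs
  intro j
  rw [Real.norm_eq_abs, abs_of_nonneg (zpow_nonneg hr0.le _)]
  calc r ^ (e j) ≤ r ^ (|j| - 1) :=
        zpow_le_zpow_right_of_le_one₀ hr0 hr1.le (he j)
    _ = r⁻¹ * r ^ |j| := by rw [zpow_sub₀ hr0.ne', zpow_one]; ring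
lemma summable_log_one_add (u : ℕ → ℂ) (hu : Summable u) :
    Summable (fun n => Complex.log (1 + u n)) := by
  apply Summable.of_norm_bounded_eventually_nat (hu.norm.mul_left (3/2))
  have ht : Tendsto (fun n => ‖u n‖) atTop (nhds 0) := by
    simpa using hu.tendsto_atTop_zero.norm
  filter_upwards [ht.eventually_le_const (by norm_num : (0:ℝ) < 1/2)] with n hn
  exact Complex.norm_log_one_add_half_le_self hn

lemma mult_one_add (u : ℕ → ℂ) (hu : Summable u) (h1 : ∀ n, 1 + u n ≠ 0) :
    Multipliable (fun n => 1 + u n) ∧ (∏' n, (1 + u n)) ≠ 0 := by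
  have hlog := summable_log_one_add u hu
  refine ⟨Complex.multipliable_of_summable_log hlog, ?_⟩
  have e : Complex.exp (∑' n, Complex.log (1 + u n)) = ∏' n, (1 + u n) :=
    Complex.cexp_tsum_eq_tprod h1 hlog
  rw [← e]
  exact Complex.exp_ne_zero _

lemma tprod_peel (u : ℕ → ℂ) (hu : Summable u) (h1 : ∀ n, 1 + u n ≠ 0) :
    ∏' n : ℕ, (1 + u n) = (1 + u 0) * ∏' n : ℕ, (1 + u (n+1)) := by
  have hlog := summable_log_one_add u hu
  have hu' : Summable (fun n => u (n+1)) := (summable_nat_add_iff 1).2 hu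
  have hlog' : Summable (fun n => Complex.log (1 + u (n+1))) :=
    summable_log_one_add _ hu'
  have e1 : Complex.exp (∑' n, Complex.log (1 + u n)) = ∏' n, (1 + u n) :=
    Complex.cexp_tsum_eq_tprod h1 hlog
  have e2 : Complex.exp (∑' n, Complex.log (1 + u (n+1))) = ∏' n, (1 + u (n+1)) :=
    Complex.cexp_tsum_eq_tprod (fun n => h1 (n+1)) hlog'
  rw [← e1, ← e2, Summable.tsum_eq_zero_add hlog, Complex.exp_add, Complex.exp_log (h1 0)]

lemma summable_qpow (q : ℂ) (hq1 : ‖q‖ < 1) (z : ℂ) :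
    Summable (fun n : ℕ => z * q^(n+1)) :=
  ((summable_geometric_of_norm_lt_one hq1).mul_left (z*q)).congr
    (fun n => by rw [pow_succ]; ring)

lemma one_add_ne (q : ℂ) (hq1 : ‖q‖ < 1) (z : ℂ) (hz : ‖z‖ ≤ 1) (n : ℕ) (hn : n ≠ 0) :
    1 + z * q^n ≠ 0 := by
  intro h
  have h2 : z * q^n = -1 := by linear_combination h
  have h3 : ‖z * q^n‖ < 1 := by
    rw [norm_mul, norm_pow]
    calc ‖z‖ * ‖q‖^n ≤ 1 * ‖q‖^n := by
          apply mul_le_mul_of_nonneg_right hz (by positivity)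
      _ = ‖q‖^n := one_mul _
      _ < 1 := pow_lt_one₀ (norm_nonneg q) hq1 hn
  rw [h2] at h3
  norm_num at h3

lemma mult_fac (q : ℂ) (hq1 : ‖q‖ < 1) :
    Multipliable (fun n : ℕ => 1 - q^(n+1)) ∧ (∏' n : ℕ, (1 - q^(n+1))) ≠ 0 := by
  have := mult_one_add (fun n : ℕ => (-1) * q^(n+1)) (summable_qpow q hq1 (-1))
    (fun n => by
      have := one_add_ne q hq1 (-1) (by norm_num) (n+1) (Nat.succ_ne_zero n)
      simpa using this)
  constructor
  · exact this.1.congr (fun n => by ring)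
  · have e : (fun n : ℕ => 1 + (-1) * q^(n+1)) = (fun n : ℕ => 1 - q^(n+1)) := by
      funext n; ring
    rw [e] at this
    exact this.2

lemma Pp_tendsto (q : ℂ) (hq1 : ‖q‖ < 1) :
    Tendsto (fun N => Pp q N) atTop (nhds (∏' n : ℕ, (1 - q^(n+1)))) :=
  (mult_fac q hq1).1.hasProd.tendsto_prod_nat

lemma gbz_tendsto (q : ℂ) (hq1 : ‖q‖ < 1) (j : ℤ) :
    Tendsto (fun N : ℕ => gbz q (2*N) ((N:ℤ)+j)) atTop
      (nhds ((∏' n : ℕ, (1 - q^(n+1)))⁻¹)) := by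
  set Pq := ∏' n : ℕ, (1 - q^(n+1)) with hPq
  have hne : Pq ≠ 0 := (mult_fac q hq1).2
  have h2 : Tendsto (fun N : ℕ => 2*N) atTop atTop :=
    tendsto_atTop_atTop.mpr fun b => ⟨b, fun a ha => by omega⟩
  have h3 : Tendsto (fun N : ℕ => ((N:ℤ)+j).toNat) atTop atTop :=
    tendsto_atTop_atTop.mpr fun b => ⟨b + j.natAbs, fun a ha => by omega⟩
  have h4 : Tendsto (fun N : ℕ => ((N:ℤ)-j).toNat) atTop atTop :=
    tendsto_atTop_atTop.mpr fun b => ⟨b + j.natAbs, fun a ha => by omega⟩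
  have main : Tendsto (fun N : ℕ =>
      Pp q (2*N) * (Pp q (((N:ℤ)+j).toNat))⁻¹ * (Pp q (((N:ℤ)-j).toNat))⁻¹) atTop
      (nhds (Pq * Pq⁻¹ * Pq⁻¹)) :=
    (((Pp_tendsto q hq1).comp h2).mul (((Pp_tendsto q hq1).comp h3).inv₀ hne)).mul
      (((Pp_tendsto q hq1).comp h4).inv₀ hne)
  rw [show Pq * Pq⁻¹ * Pq⁻¹ = Pq⁻¹ by field_simp] at main
  apply main.congr'
  filter_upwards [eventually_ge_atTop j.natAbs] with N hN
  have e1 := gbz_formula q hq1 (2*N) (((N:ℤ)+j).toNat) (by omega)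
  rw [show ((((N:ℤ)+j).toNat : ℕ) : ℤ) = (N:ℤ)+j by omega,
    show 2*N - ((N:ℤ)+j).toNat = ((N:ℤ)-j).toNat by omega] at e1
  exact e1.symm

lemma SS_tendsto (q : ℂ) (hq0 : q ≠ 0) (hq1 : ‖q‖ < 1) (z : ℂ) (hz1 : ‖z‖ = 1) :
    Tendsto (fun N => SS q z N) atTop
      (nhds ((∏' n : ℕ, (1 - q^(n+1)))⁻¹ * ∑' j : ℤ, q^(tri j) * z^j)) := by
  have hr0 : (0:ℝ) < ‖q‖ := norm_pos_iff.mpr hq0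
  rw [← tsum_mul_left]
  have := tendsto_tsum_of_dominated_convergence
    (f := fun (N : ℕ) (j : ℤ) => gbz q (2*N) ((N:ℤ)+j) * q^(tri j) * z^j)
    (g := fun j : ℤ => (∏' n : ℕ, (1 - q^(n+1)))⁻¹ * (q^(tri j) * z^j))
    (bound := fun j : ℤ => Mb ‖q‖ * ‖q‖^(tri j))
    ((summable_zgeo ‖q‖ hr0 hq1 tri tri_lb).mul_left _)
    (fun j => by
      have := ((gbz_tendsto q hq1 j).mul_const (q^(tri j))).mul_const (z^j)
      simpa [mul_assoc] using this)
    (by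
      apply Eventually.of_forall
      intro N j
      rw [norm_mul, norm_mul, norm_zpow, norm_zpow, hz1, one_zpow, mul_one]
      exact mul_le_mul_of_nonneg_right (gbz_bound q hq1 (2*N) ((N:ℤ)+j))
        (zpow_nonneg (norm_nonneg q) _))
  exact this

lemma prod_facts (q : ℂ) (hq1 : ‖q‖ < 1) (z : ℂ) (hz1 : ‖z‖ = 1) (hz' : 1 + z⁻¹ ≠ 0) :
    Multipliable (fun n : ℕ => 1 + z * q^(n+1)) ∧ (∏' n : ℕ, (1 + z * q^(n+1))) ≠ 0
    ∧ Multipliable (fun n : ℕ => 1 + z⁻¹ * q^n) ∧ (∏' n : ℕ, (1 + z⁻¹ * q^n)) ≠ 0 := by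
  have hz0 : z ≠ 0 := by intro h; rw [h] at hz1; simp at hz1
  have hzi : ‖z⁻¹‖ = 1 := by rw [norm_inv, hz1]; norm_num
  have m1 := mult_one_add (fun n : ℕ => z * q^(n+1)) (summable_qpow q hq1 z)
    (fun n => one_add_ne q hq1 z hz1.le (n+1) (Nat.succ_ne_zero n))
  have hsum2 : Summable (fun n : ℕ => z⁻¹ * q^n) :=
    (summable_geometric_of_norm_lt_one hq1).mul_left z⁻¹
  have hne2 : ∀ n : ℕ, 1 + z⁻¹ * q^n ≠ 0 := by
    intro n
    cases n with
    | zero => simpa using hz'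
    | succ n => exact one_add_ne q hq1 z⁻¹ hzi.le (n+1) (Nat.succ_ne_zero n)
  have m2 := mult_one_add (fun n : ℕ => z⁻¹ * q^n) hsum2 hne2
  exact ⟨m1.1, m1.2, m2.1, m2.2⟩

lemma jtp_inf (q : ℂ) (hq0 : q ≠ 0) (hq1 : ‖q‖ < 1) (z : ℂ) (hz1 : ‖z‖ = 1)
    (hz' : 1 + z⁻¹ ≠ 0) :
    (∏' n : ℕ, (1 + z * q^(n+1))) * (∏' n : ℕ, (1 + z⁻¹ * q^n))
      = (∏' n : ℕ, (1 - q^(n+1)))⁻¹ * ∑' j : ℤ, q^(tri j) * z^j := by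
  have hz0 : z ≠ 0 := by intro h; rw [h] at hz1; simp at hz1
  obtain ⟨m1, _, m2, _⟩ := prod_facts q hq1 z hz1 hz'
  have hprod : Tendsto (fun N => ∏ n ∈ range N, ((1 + z * q^((n:ℤ)+1)) * (1 + z⁻¹ * q^((n:ℤ)))))
      atTop (nhds ((∏' n : ℕ, (1 + z * q^(n+1))) * (∏' n : ℕ, (1 + z⁻¹ * q^n)))) := by
    have e : ∀ N, ∏ n ∈ range N, ((1 + z * q^((n:ℤ)+1)) * (1 + z⁻¹ * q^((n:ℤ))))
        = (∏ n ∈ range N, (1 + z * q^(n+1))) * (∏ n ∈ range N, (1 + z⁻¹ * q^n)) := by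
      intro N
      rw [← prod_mul_distrib]
      apply prod_congr rfl
      intro n _
      rw [show ((n:ℤ)+1) = ((n+1 : ℕ) : ℤ) by push_cast; ring, zpow_natCast, zpow_natCast]
    simp only [e]
    exact (m1.hasProd.tendsto_prod_nat).mul (m2.hasProd.tendsto_prod_nat)
  have hss : Tendsto (fun N => ∏ n ∈ range N, ((1 + z * q^((n:ℤ)+1)) * (1 + z⁻¹ * q^((n:ℤ)))))
      atTop (nhds ((∏' n : ℕ, (1 - q^(n+1)))⁻¹ * ∑' j : ℤ, q^(tri j) * z^j)) := by
    have := SS_tendsto q hq0 hq1 z hz1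
    apply Tendsto.congr' _ this
    exact Eventually.of_forall (fun N => (jtp_fin q z hq0 hz0 N).symm)
  exact tendsto_nhds_unique hprod hss
lemma tsum_split (f : ℤ → ℂ) (hfe : Summable (fun k : ℤ => f (2*k)))
    (hfo : Summable (fun k : ℤ => f (2*k-1))) :
    ∑' j : ℤ, f j = (∑' k : ℤ, f (2*k)) + (∑' k : ℤ, f (2*k-1)) := by
  classical
  set fe : ℤ → ℂ := fun j => if Even j then f j else 0 with hfe_def
  set fo : ℤ → ℂ := fun j => if Even j then 0 else f j with hfo_def
  have hg1 : Function.Injective (fun k : ℤ => 2*k) := by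
    intro a b h; dsimp only at h; omega
  have hg2 : Function.Injective (fun k : ℤ => 2*k-1) := by
    intro a b h; dsimp only at h; omega
  have hs1 : ∀ x, x ∉ Set.range (fun k : ℤ => 2*k) → fe x = 0 := by
    intro x hx
    have hne : ¬ Even x := by
      rintro ⟨r, hr⟩; exact hx ⟨r, by dsimp only; omega⟩
    simp [hfe_def, hne]
  have hs2 : ∀ x, x ∉ Set.range (fun k : ℤ => 2*k-1) → fo x = 0 := by
    intro x hx
    have hev : Even x := by
      by_contra h
      rcases Int.even_or_odd x with h' | ⟨r, hr⟩
      · exact h h'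
      · exact hx ⟨r+1, by dsimp only; omega⟩
    simp [hfo_def, hev]
  have he1 : ∀ k : ℤ, fe (2*k) = f (2*k) := fun k => if_pos ⟨k, by ring⟩
  have he2 : ∀ k : ℤ, fo (2*k-1) = f (2*k-1) := by
    intro k
    apply if_neg
    rintro ⟨r, hr⟩; omega
  have hse : Summable fe := (hg1.summable_iff hs1).mp (hfe.congr fun k => (he1 k).symm)
  have hso : Summable fo := (hg2.summable_iff hs2).mp (hfo.congr fun k => (he2 k).symm)
  have hf : ∀ j, f j = fe j + fo j := by
    intro j; by_cases h : Even j <;> simp [hfe_def, hfo_def, h]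
  calc ∑' j, f j = ∑' j, (fe j + fo j) := tsum_congr hf
    _ = (∑' j, fe j) + (∑' j, fo j) := Summable.tsum_add hse hso
    _ = (∑' k : ℤ, f (2*k)) + (∑' k : ℤ, f (2*k-1)) := by
        rw [← hg1.tsum_eq (Function.support_subset_iff'.mpr hs1),
          ← hg2.tsum_eq (Function.support_subset_iff'.mpr hs2)]
        exact congrArg₂ (· + ·) (tsum_congr he1) (tsum_congr he2)

lemma summable_wq (q : ℂ) (hq0 : q ≠ 0) (hq1 : ‖q‖ < 1) (c : ℤ → ℂ) (C : ℝ)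
    (hc : ∀ j, ‖c j‖ ≤ C) (e : ℤ → ℤ) (he : ∀ j, |j| - 1 ≤ e j) :
    Summable (fun j : ℤ => c j * q ^ (e j)) := by
  have hr0 : (0:ℝ) < ‖q‖ := norm_pos_iff.mpr hq0
  apply Summable.of_norm_bounded
    ((summable_zgeo ‖q‖ hr0 hq1 e he).mul_left C)
  intro j
  rw [norm_mul, norm_zpow]
  exact mul_le_mul_of_nonneg_right (hc j) (zpow_nonneg (norm_nonneg q) _)

lemma lb_quad : (∀ j:ℤ, |j| - 1 ≤ 2*j^2+j) ∧ (∀ j:ℤ, |j| - 1 ≤ 2*j^2-j)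
    ∧ (∀ j:ℤ, |j| - 1 ≤ 8*j^2+2*j) ∧ (∀ j:ℤ, |j| - 1 ≤ 8*j^2-2*j) := by
  refine ⟨fun j => ?_, fun j => ?_, fun j => ?_, fun j => ?_⟩ <;>
    rcases abs_cases j with ⟨h,_⟩ | ⟨h,_⟩ <;> rw [h] <;>
    nlinarith [sq_nonneg j, sq_nonneg (j+1), sq_nonneg (j-1), sq_nonneg (2*j+1),
      sq_nonneg (2*j-1)]

lemma zpow_twice (w : ℂ) (hw : w ≠ 0) (k : ℤ) : w ^ (2*k) = (w^2) ^ k := by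
  rw [zpow_mul, show (2:ℤ) = ((2:ℕ):ℤ) from rfl, zpow_natCast]

lemma neg_one_zpow_inv (k : ℤ) : ((-1 : ℂ) ^ k)⁻¹ = (-1 : ℂ) ^ k := by
  apply inv_eq_of_mul_eq_one_right
  rw [← zpow_add₀ (by norm_num : (-1:ℂ) ≠ 0), show k+k = 2*k by ring,
    zpow_twice (-1 : ℂ) (by norm_num) k]
  norm_num

lemma Ipow_even (k : ℤ) : Complex.I ^ (2*k) = (-1 : ℂ) ^ k := by
  rw [zpow_twice _ Complex.I_ne_zero, Complex.I_sq]

lemma theta_combine (q : ℂ) (hq0 : q ≠ 0) (hq1 : ‖q‖ < 1) (z : ℂ)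
    (hz2 : z^2 = Complex.I) (hz1 : ‖z‖ = 1) :
    (1+z) * (∑' j : ℤ, q^(tri j) * z^j) + (1-z) * (∑' j : ℤ, q^(tri j) * (-z)^j)
      = 4 * ∑' j : ℤ, (-1:ℂ)^j * q^(8*j^2-2*j) := by
  have hz0 : z ≠ 0 := by intro h; rw [h] at hz1; simp at hz1
  have hmz1 : ‖-z‖ = 1 := by rw [norm_neg, hz1]
  have hz2' : (-z)^2 = Complex.I := by rw [neg_sq, hz2]
  have hnormzp : ∀ (w : ℂ), ‖w‖ = 1 → ∀ j : ℤ, ‖w^j‖ = 1 := by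
    intro w hw j; rw [norm_zpow, hw, one_zpow]
  have hIn : ∀ k : ℤ, ‖Complex.I ^ k‖ = 1 := hnormzp _ Complex.norm_I
  -- step 1: combine into one sum
  set g : ℤ → ℂ := fun j => ((1+z) * z^j + (1-z) * (-z)^j) * q^(tri j) with hg_def
  have hgsum : Summable g := by
    apply summable_wq q hq0 hq1 _ 4 ?_ tri tri_lb
    intro j
    have b1 : ‖(1+z) * z^j‖ ≤ 2 := by
      rw [norm_mul, hnormzp z hz1 j, mul_one]
      calc ‖1+z‖ ≤ ‖(1:ℂ)‖ + ‖z‖ := norm_add_le _ _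
        _ = 2 := by rw [norm_one, hz1]; norm_num
    have b2 : ‖(1-z) * (-z)^j‖ ≤ 2 := by
      rw [norm_mul, hnormzp _ hmz1 j, mul_one]
      calc ‖1-z‖ ≤ ‖(1:ℂ)‖ + ‖z‖ := norm_sub_le _ _
        _ = 2 := by rw [norm_one, hz1]; norm_num
    calc ‖(1+z) * z^j + (1-z) * (-z)^j‖ ≤ ‖(1+z) * z^j‖ + ‖(1-z) * (-z)^j‖ := norm_add_le _ _
      _ ≤ 4 := by linarith
  have hsum1 : Summable (fun j : ℤ => (1+z) * (q^(tri j) * z^j)) := by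
    apply Summable.congr (summable_wq q hq0 hq1 (fun j => (1+z) * z^j) 2 ?_ tri tri_lb)
    · intro j; ring
    · intro j
      rw [norm_mul, hnormzp z hz1 j, mul_one]
      calc ‖1+z‖ ≤ ‖(1:ℂ)‖ + ‖z‖ := norm_add_le _ _
        _ = 2 := by rw [norm_one, hz1]; norm_num
  have hsum2 : Summable (fun j : ℤ => (1-z) * (q^(tri j) * (-z)^j)) := by
    apply Summable.congr (summable_wq q hq0 hq1 (fun j => (1-z) * (-z)^j) 2 ?_ tri tri_lb)
    · intro j; ring
    · intro j
      rw [norm_mul, hnormzp _ hmz1 j, mul_one]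
      calc ‖1-z‖ ≤ ‖(1:ℂ)‖ + ‖z‖ := norm_sub_le _ _
        _ = 2 := by rw [norm_one, hz1]; norm_num
  have step1 : (1+z) * (∑' j : ℤ, q^(tri j) * z^j) + (1-z) * (∑' j : ℤ, q^(tri j) * (-z)^j)
      = ∑' j : ℤ, g j := by
    rw [← tsum_mul_left, ← tsum_mul_left, ← Summable.tsum_add hsum1 hsum2]
    exact tsum_congr fun j => by rw [hg_def]; ring
  -- step 2: even/odd split of g
  have hge : ∀ k : ℤ, g (2*k) = 2 * Complex.I^k * q^(2*k^2+k) := by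
    intro k
    rw [hg_def]
    have e1 : z^(2*k) = Complex.I^k := by rw [zpow_twice z hz0, hz2]
    have e2 : (-z)^(2*k) = Complex.I^k := by rw [zpow_twice (-z) (neg_ne_zero.mpr hz0), hz2']
    have e3 : tri (2*k) = 2*k^2+k := by
      apply mul_left_cancel₀ (two_ne_zero (α := ℤ))
      rw [tri_two]; ring
    simp only [e1, e2, e3]
    ring
  have hgo : ∀ k : ℤ, g (2*k-1) = 2 * Complex.I^k * q^(2*k^2-k) := by
    intro k
    rw [hg_def]
    have e1 : z^(2*k-1) = Complex.I^k * z⁻¹ := by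
      rw [zpow_sub_one₀ hz0, zpow_twice z hz0, hz2]
    have e2 : (-z)^(2*k-1) = -(Complex.I^k * z⁻¹) := by
      rw [zpow_sub_one₀ (neg_ne_zero.mpr hz0), zpow_twice (-z) (neg_ne_zero.mpr hz0), hz2',
        inv_neg]
      ring
    have e3 : tri (2*k-1) = 2*k^2-k := by
      apply mul_left_cancel₀ (two_ne_zero (α := ℤ))
      rw [tri_two]; ring
    simp only [e1, e2, e3]
    have : (1+z) * (Complex.I^k * z⁻¹) + (1-z) * -(Complex.I^k * z⁻¹)
        = 2 * Complex.I^k * (z * z⁻¹) := by ring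
    rw [this, mul_inv_cancel₀ hz0]
    ring
  have hsume : Summable (fun k : ℤ => g (2*k)) := by
    apply Summable.congr (summable_wq q hq0 hq1 (fun k => 2 * Complex.I^k) 2
      (fun k => by rw [norm_mul, hIn, mul_one]; norm_num) (fun k => 2*k^2+k) lb_quad.1)
    intro k; rw [hge k]
  have hsumo : Summable (fun k : ℤ => g (2*k-1)) := by
    apply Summable.congr (summable_wq q hq0 hq1 (fun k => 2 * Complex.I^k) 2
      (fun k => by rw [norm_mul, hIn, mul_one]; norm_num) (fun k => 2*k^2-k) lb_quad.2.1)
    intro k; rw [hgo k]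
  have step2 : ∑' j : ℤ, g j
      = (∑' k : ℤ, 2 * Complex.I^k * q^(2*k^2+k)) + (∑' k : ℤ, 2 * Complex.I^k * q^(2*k^2-k)) := by
    rw [tsum_split g hsume hsumo]
    exact congrArg₂ (· + ·) (tsum_congr hge) (tsum_congr hgo)
  -- step 3: reflect the second sum
  have step3 : (∑' k : ℤ, 2 * Complex.I^k * q^(2*k^2-k))
      = ∑' k : ℤ, 2 * Complex.I^(-k) * q^(2*k^2+k) := by
    rw [← (Equiv.neg ℤ).tsum_eq (fun k : ℤ => 2 * Complex.I^k * q^(2*k^2-k))]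
    apply tsum_congr
    intro k
    simp only [Equiv.neg_apply]
    rw [show 2*(-k)^2-(-k) = 2*k^2+k by ring]
  -- step 4: combine
  have hsum3 : Summable (fun k : ℤ => 2 * Complex.I^(-k) * q^(2*k^2+k)) :=
    summable_wq q hq0 hq1 (fun k => 2 * Complex.I^(-k)) 2
      (fun k => by rw [norm_mul, hIn, mul_one]; norm_num) (fun k => 2*k^2+k) lb_quad.1
  have hsum4 : Summable (fun k : ℤ => 2 * Complex.I^k * q^(2*k^2+k)) :=
    summable_wq q hq0 hq1 (fun k => 2 * Complex.I^k) 2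
      (fun k => by rw [norm_mul, hIn, mul_one]; norm_num) (fun k => 2*k^2+k) lb_quad.1
  set h : ℤ → ℂ := fun k => (2 * Complex.I^k + 2 * Complex.I^(-k)) * q^(2*k^2+k) with hh_def
  have step4 : (∑' k : ℤ, 2 * Complex.I^k * q^(2*k^2+k))
      + (∑' k : ℤ, 2 * Complex.I^(-k) * q^(2*k^2+k)) = ∑' k : ℤ, h k := by
    rw [← Summable.tsum_add hsum4 hsum3]
    exact tsum_congr fun k => by rw [hh_def]; ring
  -- step 5: even/odd split of h
  have hIinv : ∀ k : ℤ, Complex.I^(-(2*k)) = (-1:ℂ)^k := by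
    intro k
    rw [zpow_neg, Ipow_even, neg_one_zpow_inv]
  have hhe : ∀ m : ℤ, h (2*m) = 4 * (-1:ℂ)^m * q^(8*m^2+2*m) := by
    intro m
    rw [hh_def]
    simp only [Ipow_even, hIinv]
    rw [show 2*(2*m)^2+2*m = 8*m^2+2*m by ring]
    ring
  have hho : ∀ m : ℤ, h (2*m-1) = 0 := by
    intro m
    simp only [hh_def]
    have e1 : Complex.I^(2*m-1) = (-1:ℂ)^m * (-Complex.I) := by
      rw [zpow_sub_one₀ Complex.I_ne_zero, Ipow_even, Complex.inv_I]
    have e2 : Complex.I^(-(2*m-1)) = (-1:ℂ)^m * Complex.I := by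
      rw [show -(2*m-1) = 2*(-m)+1 by ring, zpow_add_one₀ Complex.I_ne_zero, Ipow_even]
      rw [show ((-1:ℂ))^(-m) = ((-1:ℂ)^m)⁻¹ by rw [zpow_neg], neg_one_zpow_inv]
    rw [e1, e2]
    ring
  have hsume2 : Summable (fun m : ℤ => h (2*m)) := by
    apply Summable.congr (summable_wq q hq0 hq1 (fun m => 4 * (-1:ℂ)^m) 4
      (fun m => by
        rw [norm_mul, hnormzp (-1:ℂ) (by norm_num) m, mul_one]; norm_num)
      (fun m => 8*m^2+2*m) lb_quad.2.2.1)
    intro m; rw [hhe m]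
  have hsumo2 : Summable (fun m : ℤ => h (2*m-1)) := by
    apply Summable.congr (summable_of_ne_finset_zero (s := (∅ : Finset ℤ))
      (f := fun m : ℤ => (0:ℂ)) (fun m _ => rfl))
    intro m; rw [hho m]
  have step5 : ∑' k : ℤ, h k = ∑' m : ℤ, 4 * (-1:ℂ)^m * q^(8*m^2+2*m) := by
    rw [tsum_split h hsume2 hsumo2]
    rw [tsum_congr hho, tsum_zero, add_zero]
    exact tsum_congr hhe
  -- step 6: reflect to final form
  have step6 : ∑' m : ℤ, 4 * (-1:ℂ)^m * q^(8*m^2+2*m)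
      = 4 * ∑' j : ℤ, (-1:ℂ)^j * q^(8*j^2-2*j) := by
    rw [← tsum_mul_left, ← (Equiv.neg ℤ).tsum_eq (fun j : ℤ => 4 * ((-1:ℂ)^j * q^(8*j^2-2*j)))]
    apply tsum_congr
    intro m
    simp only [Equiv.neg_apply]
    rw [show 8*(-m)^2-2*(-m) = 8*m^2+2*m by ring,
      show ((-1:ℂ))^(-m) = ((-1:ℂ)^m)⁻¹ by rw [zpow_neg], neg_one_zpow_inv]
    ring
  rw [step1, step2, step3, step4, step5, step6]
end JT8

open JT8 Filter Finset Complex in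
theorem stmt_8 (q : ℂ) (hq : ‖q‖ < 1) :
    (1 + (Real.sqrt 2 : ℂ)) *
        (∏' n : ℕ, (1 + (Real.sqrt 2 : ℂ) * q ^ (n + 1) + q ^ (2 * (n + 1)))) -
      (1 - (Real.sqrt 2 : ℂ)) *
        (∏' n : ℕ, (1 - (Real.sqrt 2 : ℂ) * q ^ (n + 1) + q ^ (2 * (n + 1)))) =
    2 * (Real.sqrt 2 : ℂ) * (∑' j : ℤ, (-1) ^ j * q ^ (8 * j ^ 2 - 2 * j)) /
      ∏' n : ℕ, (1 - q ^ (n + 1)) := by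
  set s : ℂ := (Real.sqrt 2 : ℂ) with hs_def
  have hs2 : s ^ 2 = 2 := by
    rw [hs_def, ← Complex.ofReal_pow, Real.sq_sqrt (by norm_num : (0:ℝ) ≤ 2)]
    norm_num
  have hs0 : s ≠ 0 := by
    intro h; rw [h] at hs2; norm_num at hs2
  rcases eq_or_ne q 0 with rfl | hq0
  · -- q = 0
    have e1 : ∀ n : ℕ, 1 + s * (0:ℂ)^(n+1) + (0:ℂ)^(2*(n+1)) = 1 := by
      intro n
      rw [zero_pow (Nat.succ_ne_zero n), zero_pow (by omega : 2*(n+1) ≠ 0)]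
      ring
    have e2 : ∀ n : ℕ, 1 - s * (0:ℂ)^(n+1) + (0:ℂ)^(2*(n+1)) = 1 := by
      intro n
      rw [zero_pow (Nat.succ_ne_zero n), zero_pow (by omega : 2*(n+1) ≠ 0)]
      ring
    have e3 : ∀ n : ℕ, (1:ℂ) - (0:ℂ)^(n+1) = 1 := by
      intro n; rw [zero_pow (Nat.succ_ne_zero n)]; ring
    have e4 : (∑' j : ℤ, (-1:ℂ)^j * (0:ℂ)^(8*j^2-2*j)) = 1 := by
      rw [tsum_eq_single 0 (fun j hj => by
        have hne : 8*j^2 - 2*j ≠ 0 := by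
          intro hcontra
          rcases lt_or_gt_of_ne hj with h | h
          · nlinarith [sq_nonneg j]
          · nlinarith [mul_pos h h]
        rw [zero_zpow _ hne, mul_zero])]
      norm_num
    rw [tprod_congr e1, tprod_congr e2, tprod_congr e3, tprod_one, e4]
    rw [mul_one, mul_one, mul_one, div_one]
    ring
  · have hq1 : ‖q‖ < 1 := hq
    set z : ℂ := (1 + Complex.I)/s with hz_def
    have hI2 := Complex.I_sq
    have hz0 : z ≠ 0 := by
      rw [hz_def]
      apply div_ne_zero _ hs0
      intro h
      have := congrArg Complex.im h
      simp at this
    have hz2 : z^2 = Complex.I := by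
      rw [hz_def, div_pow, hs2, show (1+Complex.I)^2 = 2*Complex.I by linear_combination hI2]
      ring
    have hz1 : ‖z‖ = 1 := by
      have h2 : ‖z‖^2 = 1 := by rw [← norm_pow, hz2, Complex.norm_I]
      have h3 : (‖z‖ - 1) * (‖z‖ + 1) = 0 := by nlinarith
      rcases mul_eq_zero.mp h3 with h | h
      · linarith
      · have := norm_nonneg z; linarith
    have hmz1 : ‖-z‖ = 1 := by rw [norm_neg, hz1]
    have hzinv : z⁻¹ = (1 - Complex.I)/s := by
      apply inv_eq_of_mul_eq_one_right
      rw [hz_def, div_mul_div_comm, show (1+Complex.I)*(1-Complex.I) = 2 by linear_combination -hI2,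
        show s*s = (2:ℂ) by linear_combination hs2]
      norm_num
    have hsum : z + z⁻¹ = s := by
      rw [hz_def, hzinv, ← add_div, show (1+Complex.I+(1-Complex.I)) = 2 by ring,
        div_eq_iff hs0]
      linear_combination -hs2
    have hprod : z * z⁻¹ = 1 := mul_inv_cancel₀ hz0
    have h1pzi : 1 + z⁻¹ ≠ 0 := by
      rw [hzinv]
      intro h
      have h2 : s + (1 - Complex.I) = 0 := by
        calc s + (1 - Complex.I) = (1 + (1 - Complex.I)/s) * s := by
              rw [add_mul, one_mul, div_mul_cancel₀ _ hs0]
          _ = 0 * s := by rw [h]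
          _ = 0 := zero_mul s
      have h3 := congrArg Complex.im h2
      simp [hs_def] at h3
    have h1mzi : 1 + (-z)⁻¹ ≠ 0 := by
      rw [inv_neg, hzinv]
      intro h
      have h2 : s - (1 - Complex.I) = 0 := by
        calc s - (1 - Complex.I) = (1 + -((1 - Complex.I)/s)) * s := by
              rw [add_mul, one_mul, neg_mul, div_mul_cancel₀ _ hs0]; ring
          _ = 0 * s := by rw [h]
          _ = 0 := zero_mul s
      have h3 := congrArg Complex.im h2
      simp [hs_def] at h3
    have hzi1 : ‖z⁻¹‖ = 1 := by rw [norm_inv, hz1]; norm_num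
    have hmzi1 : ‖(-z)⁻¹‖ = 1 := by rw [norm_inv, norm_neg, hz1]; norm_num
    -- multipliability
    obtain ⟨m1p, hne1p, m2p, hne2p⟩ := prod_facts q hq1 z hz1 h1pzi
    obtain ⟨m1m, hne1m, m2m, hne2m⟩ := prod_facts q hq1 (-z) hmz1 h1mzi
    have m3p : Multipliable (fun n : ℕ => 1 + z⁻¹ * q^(n+1)) :=
      (mult_one_add _ (summable_qpow q hq1 z⁻¹)
        (fun n => one_add_ne q hq1 z⁻¹ hzi1.le (n+1) (Nat.succ_ne_zero n))).1
    have m3m : Multipliable (fun n : ℕ => 1 + (-z)⁻¹ * q^(n+1)) :=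
      (mult_one_add _ (summable_qpow q hq1 (-z)⁻¹)
        (fun n => one_add_ne q hq1 (-z)⁻¹ hmzi1.le (n+1) (Nat.succ_ne_zero n))).1
    -- peeling
    have hpeelp : (∏' n : ℕ, (1 + z⁻¹ * q^n)) = (1 + z⁻¹) * ∏' n : ℕ, (1 + z⁻¹ * q^(n+1)) := by
      have hsu : Summable (fun n : ℕ => z⁻¹ * q^n) :=
        (summable_geometric_of_norm_lt_one hq1).mul_left z⁻¹
      have hne : ∀ n : ℕ, 1 + z⁻¹ * q^n ≠ 0 := by
        intro n
        cases n with
        | zero => simpa using h1pzi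
        | succ n => exact one_add_ne q hq1 z⁻¹ hzi1.le (n+1) (Nat.succ_ne_zero n)
      have := tprod_peel (fun n => z⁻¹ * q^n) hsu hne
      simp only [pow_zero, mul_one] at this
      exact this
    have hpeelm : (∏' n : ℕ, (1 + (-z)⁻¹ * q^n)) = (1 + (-z)⁻¹) * ∏' n : ℕ, (1 + (-z)⁻¹ * q^(n+1)) := by
      have hsu : Summable (fun n : ℕ => (-z)⁻¹ * q^n) :=
        (summable_geometric_of_norm_lt_one hq1).mul_left (-z)⁻¹
      have hne : ∀ n : ℕ, 1 + (-z)⁻¹ * q^n ≠ 0 := by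
        intro n
        cases n with
        | zero => simpa using h1mzi
        | succ n => exact one_add_ne q hq1 (-z)⁻¹ hmzi1.le (n+1) (Nat.succ_ne_zero n)
      have := tprod_peel (fun n => (-z)⁻¹ * q^n) hsu hne
      simp only [pow_zero, mul_one] at this
      exact this
    -- factorizations
    have hfacp : ∀ n : ℕ, (1 + z*q^(n+1)) * (1 + z⁻¹*q^(n+1)) = 1 + s*q^(n+1) + q^(2*(n+1)) := by
      intro n
      rw [show 2*(n+1) = (n+1) + (n+1) by ring, pow_add]
      linear_combination q^(n+1) * hsum + (q^(n+1)*q^(n+1)) * hprod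
    have hfacm : ∀ n : ℕ, (1 + (-z)*q^(n+1)) * (1 + (-z)⁻¹*q^(n+1)) = 1 - s*q^(n+1) + q^(2*(n+1)) := by
      intro n
      rw [inv_neg, show 2*(n+1) = (n+1) + (n+1) by ring, pow_add]
      linear_combination (-(q^(n+1))) * hsum + (q^(n+1)*q^(n+1)) * hprod
    have hAp : (∏' n : ℕ, (1 + s * q^(n+1) + q^(2*(n+1))))
        = (∏' n : ℕ, (1 + z * q^(n+1))) * (∏' n : ℕ, (1 + z⁻¹ * q^(n+1))) := by
      rw [← Multipliable.tprod_mul m1p m3p]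
      exact tprod_congr fun n => (hfacp n).symm
    have hAm : (∏' n : ℕ, (1 - s * q^(n+1) + q^(2*(n+1))))
        = (∏' n : ℕ, (1 + (-z) * q^(n+1))) * (∏' n : ℕ, (1 + (-z)⁻¹ * q^(n+1))) := by
      rw [← Multipliable.tprod_mul m1m m3m]
      exact tprod_congr fun n => (hfacm n).symm
    -- keys
    have hkeyp : (1+z) * (1+z⁻¹) * (∏' n : ℕ, (1 + s * q^(n+1) + q^(2*(n+1))))
        = (1+z) * ((∏' n : ℕ, (1 - q^(n+1)))⁻¹ * ∑' j : ℤ, q^(tri j) * z^j) := by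
      rw [mul_assoc]
      congr 1
      calc (1+z⁻¹) * (∏' n : ℕ, (1 + s * q^(n+1) + q^(2*(n+1))))
          = (∏' n : ℕ, (1 + z * q^(n+1))) * ((1+z⁻¹) * ∏' n : ℕ, (1 + z⁻¹ * q^(n+1))) := by
            rw [hAp]; ring
        _ = (∏' n : ℕ, (1 + z * q^(n+1))) * (∏' n : ℕ, (1 + z⁻¹ * q^n)) := by rw [hpeelp]
        _ = (∏' n : ℕ, (1 - q^(n+1)))⁻¹ * ∑' j : ℤ, q^(tri j) * z^j :=
            jtp_inf q hq0 hq1 z hz1 h1pzi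
    have hkeym : (1+(-z)) * (1+(-z)⁻¹) * (∏' n : ℕ, (1 - s * q^(n+1) + q^(2*(n+1))))
        = (1+(-z)) * ((∏' n : ℕ, (1 - q^(n+1)))⁻¹ * ∑' j : ℤ, q^(tri j) * (-z)^j) := by
      rw [mul_assoc]
      congr 1
      calc (1+(-z)⁻¹) * (∏' n : ℕ, (1 - s * q^(n+1) + q^(2*(n+1))))
          = (∏' n : ℕ, (1 + (-z) * q^(n+1))) * ((1+(-z)⁻¹) * ∏' n : ℕ, (1 + (-z)⁻¹ * q^(n+1))) := by
            rw [hAm]; ring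
        _ = (∏' n : ℕ, (1 + (-z) * q^(n+1))) * (∏' n : ℕ, (1 + (-z)⁻¹ * q^n)) := by rw [hpeelm]
        _ = (∏' n : ℕ, (1 - q^(n+1)))⁻¹ * ∑' j : ℤ, q^(tri j) * (-z)^j :=
            jtp_inf q hq0 hq1 (-z) hmz1 h1mzi
    have htheta := theta_combine q hq0 hq1 z hz2 hz1
    have hcp : s*(1+s) = (1+z)*(1+z⁻¹) := by linear_combination hs2 - hsum - hprod
    have hcm : s*(1-s) = -((1+(-z))*(1+(-z)⁻¹)) := by
      rw [inv_neg]
      linear_combination -hs2 - hsum + hprod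
    rw [div_eq_mul_inv]
    apply mul_left_cancel₀ hs0
    calc s * ((1 + s) * (∏' n : ℕ, (1 + s * q^(n+1) + q^(2*(n+1))))
          - (1 - s) * (∏' n : ℕ, (1 - s * q^(n+1) + q^(2*(n+1)))))
        = (s*(1+s)) * (∏' n : ℕ, (1 + s * q^(n+1) + q^(2*(n+1))))
          - (s*(1-s)) * (∏' n : ℕ, (1 - s * q^(n+1) + q^(2*(n+1)))) := by ring
      _ = ((1+z)*(1+z⁻¹)) * (∏' n : ℕ, (1 + s * q^(n+1) + q^(2*(n+1))))
          + ((1+(-z))*(1+(-z)⁻¹)) * (∏' n : ℕ, (1 - s * q^(n+1) + q^(2*(n+1)))) := by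
            rw [hcp, hcm]; ring
      _ = (1+z) * ((∏' n : ℕ, (1 - q^(n+1)))⁻¹ * ∑' j : ℤ, q^(tri j) * z^j)
          + (1+(-z)) * ((∏' n : ℕ, (1 - q^(n+1)))⁻¹ * ∑' j : ℤ, q^(tri j) * (-z)^j) := by
            rw [← hkeyp, ← hkeym]
      _ = (∏' n : ℕ, (1 - q^(n+1)))⁻¹
          * ((1+z) * (∑' j : ℤ, q^(tri j) * z^j) + (1-z) * (∑' j : ℤ, q^(tri j) * (-z)^j)) := by
            ring
      _ = (∏' n : ℕ, (1 - q^(n+1)))⁻¹ * (4 * ∑' j : ℤ, (-1:ℂ)^j * q^(8*j^2-2*j)) := by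
            rw [htheta]
      _ = s * (2 * s * (∑' j : ℤ, (-1:ℂ)^j * q^(8*j^2-2*j)) * (∏' n : ℕ, (1 - q^(n+1)))⁻¹) := by
            linear_combination (-(2 * (∑' j : ℤ, (-1:ℂ)^j * q^(8*j^2-2*j))
              * (∏' n : ℕ, (1 - q^(n+1)))⁻¹)) * hs2
end

section
/- Let q be a complex number with |q| < 1, and for each integer k ≥ 0 set B₂(k) = (1+√2)·sin((2k+1)·3π/8)/sin(3π/8) − (1−√2)·sin((2k+1)π/8)/sin(π/8). Then ∑_{k=0}^∞ (−1)^k B₂(k) q^{k(k+1)/2} = 2√2 · ∑_{j=-∞}^∞ (−1)^j q^{8j²−2j}. -/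
/-- The coefficient `B₂(k) = (1+√2)·sin((2k+1)·3π/8)/sin(3π/8) - (1-√2)·sin((2k+1)π/8)/sin(π/8)`. -/
noncomputable def B₂ (k : ℕ) : ℝ :=
  (1 + Real.sqrt 2) * Real.sin ((2 * k + 1) * (3 * Real.pi) / 8) / Real.sin (3 * Real.pi / 8) -
    (1 - Real.sqrt 2) * Real.sin ((2 * k + 1) * Real.pi / 8) / Real.sin (Real.pi / 8)

open Real

lemma s1_pos : 0 < Real.sin (π / 8) :=
  Real.sin_pos_of_pos_of_lt_pi (by positivity) (by nlinarith [pi_pos])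

lemma s3_pos : 0 < Real.sin (3 * π / 8) :=
  Real.sin_pos_of_pos_of_lt_pi (by positivity) (by nlinarith [pi_pos])

lemma s3_eq : Real.sin (3 * π / 8) = Real.cos (π / 8) := by
  rw [show 3 * π / 8 = π / 2 - π / 8 by ring, Real.sin_pi_div_two_sub]

lemma cos_sq_eighth : Real.cos (π / 8) ^ 2 = (2 + Real.sqrt 2) / 4 := by
  have h := Real.cos_two_mul (π / 8)
  rw [show 2 * (π / 8) = π / 4 by ring, Real.cos_pi_div_four] at h
  nlinarith [Real.sq_sqrt (by norm_num : (0:ℝ) ≤ 2)]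

lemma sin_sq_eighth : Real.sin (π / 8) ^ 2 = (2 - Real.sqrt 2) / 4 := by
  have := Real.sin_sq_add_cos_sq (π / 8)
  rw [cos_sq_eighth] at this; linarith

lemma key_zero : (1 + Real.sqrt 2) * Real.sin (π / 8) ^ 2 +
    (1 - Real.sqrt 2) * Real.sin (3 * π / 8) ^ 2 = 0 := by
  rw [s3_eq, cos_sq_eighth, sin_sq_eighth]
  nlinarith [Real.sq_sqrt (by norm_num : (0:ℝ) ≤ 2)]

lemma B₂_zero : B₂ 0 = 2 * Real.sqrt 2 := by
  unfold B₂
  rw [show (2 * ((0:ℕ):ℝ) + 1) * (3 * π) / 8 = 3 * π / 8 by push_cast; ring,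
      show (2 * ((0:ℕ):ℝ) + 1) * π / 8 = π / 8 by push_cast; ring]
  have h0 := key_zero
  have h1 := s1_pos.ne'
  have h3 := s3_pos.ne'
  set a := Real.sin (π / 8)
  set b := Real.sin (3 * π / 8)
  field_simp
  first | linear_combination h0 | linear_combination -h0 | ring

lemma B₂_one : B₂ 1 = 0 := by
  unfold B₂
  rw [show (2 * ((1:ℕ):ℝ) + 1) * (3 * π) / 8 = π / 8 + π by push_cast; ring,
      show (2 * ((1:ℕ):ℝ) + 1) * π / 8 = 3 * π / 8 by push_cast; ring,
      Real.sin_add_pi]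
  have h0 := key_zero
  have h1 := s1_pos.ne'
  have h3 := s3_pos.ne'
  set a := Real.sin (π / 8)
  set b := Real.sin (3 * π / 8)
  field_simp
  first | linear_combination h0 | linear_combination -h0 | ring

lemma B₂_two : B₂ 2 = 0 := by
  unfold B₂
  rw [show (2 * ((2:ℕ):ℝ) + 1) * (3 * π) / 8 = -(π / 8) + 2 * π by push_cast; ring,
      show (2 * ((2:ℕ):ℝ) + 1) * π / 8 = π - 3 * π / 8 by push_cast; ring,
      Real.sin_add_two_pi, Real.sin_pi_sub, Real.sin_neg]
  have h0 := key_zero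
  have h1 := s1_pos.ne'
  have h3 := s3_pos.ne'
  set a := Real.sin (π / 8)
  set b := Real.sin (3 * π / 8)
  field_simp
  first | linear_combination h0 | linear_combination -h0 | ring

lemma B₂_three : B₂ 3 = 2 * Real.sqrt 2 := by
  unfold B₂
  rw [show (2 * ((3:ℕ):ℝ) + 1) * (3 * π) / 8 = π - 3 * π / 8 + 2 * π by push_cast; ring,
      show (2 * ((3:ℕ):ℝ) + 1) * π / 8 = π - π / 8 by push_cast; ring,
      Real.sin_add_two_pi, Real.sin_pi_sub, Real.sin_pi_sub]
  have h0 := key_zero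
  have h1 := s1_pos.ne'
  have h3 := s3_pos.ne'
  set a := Real.sin (π / 8)
  set b := Real.sin (3 * π / 8)
  field_simp
  first | linear_combination h0 | linear_combination -h0 | ring

lemma B₂_four : B₂ 4 = -(2 * Real.sqrt 2) := by
  unfold B₂
  rw [show (2 * ((4:ℕ):ℝ) + 1) * (3 * π) / 8 = 3 * π / 8 + π + 2 * π by push_cast; ring,
      show (2 * ((4:ℕ):ℝ) + 1) * π / 8 = π / 8 + π by push_cast; ring,
      Real.sin_add_two_pi, Real.sin_add_pi, Real.sin_add_pi]
  have h0 := key_zero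
  have h1 := s1_pos.ne'
  have h3 := s3_pos.ne'
  set a := Real.sin (π / 8)
  set b := Real.sin (3 * π / 8)
  field_simp
  first | linear_combination h0 | linear_combination -h0 | ring

lemma B₂_five : B₂ 5 = 0 := by
  unfold B₂
  rw [show (2 * ((5:ℕ):ℝ) + 1) * (3 * π) / 8 = π / 8 + 2 * π + 2 * π by push_cast; ring,
      show (2 * ((5:ℕ):ℝ) + 1) * π / 8 = 3 * π / 8 + π by push_cast; ring,
      Real.sin_add_two_pi, Real.sin_add_two_pi, Real.sin_add_pi]
  have h0 := key_zero
  have h1 := s1_pos.ne'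
  have h3 := s3_pos.ne'
  set a := Real.sin (π / 8)
  set b := Real.sin (3 * π / 8)
  field_simp
  first | linear_combination h0 | linear_combination -h0 | ring

lemma B₂_six : B₂ 6 = 0 := by
  unfold B₂
  rw [show (2 * ((6:ℕ):ℝ) + 1) * (3 * π) / 8 = π - π / 8 + 2 * π + 2 * π by push_cast; ring,
      show (2 * ((6:ℕ):ℝ) + 1) * π / 8 = -(3 * π / 8) + 2 * π by push_cast; ring,
      Real.sin_add_two_pi, Real.sin_add_two_pi, Real.sin_add_two_pi, Real.sin_pi_sub,
      Real.sin_neg]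
  have h0 := key_zero
  have h1 := s1_pos.ne'
  have h3 := s3_pos.ne'
  set a := Real.sin (π / 8)
  set b := Real.sin (3 * π / 8)
  field_simp
  first | linear_combination h0 | linear_combination -h0 | ring

lemma B₂_seven : B₂ 7 = -(2 * Real.sqrt 2) := by
  unfold B₂
  rw [show (2 * ((7:ℕ):ℝ) + 1) * (3 * π) / 8 = -(3 * π / 8) + 2 * π + 2 * π + 2 * π by
        push_cast; ring,
      show (2 * ((7:ℕ):ℝ) + 1) * π / 8 = -(π / 8) + 2 * π by push_cast; ring,
      Real.sin_add_two_pi, Real.sin_add_two_pi, Real.sin_add_two_pi, Real.sin_add_two_pi,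
      Real.sin_neg, Real.sin_neg]
  have h0 := key_zero
  have h1 := s1_pos.ne'
  have h3 := s3_pos.ne'
  set a := Real.sin (π / 8)
  set b := Real.sin (3 * π / 8)
  field_simp
  first | linear_combination h0 | linear_combination -h0 | ring

lemma B₂_add_eight (k : ℕ) : B₂ (k + 8) = B₂ k := by
  unfold B₂
  rw [show (2 * ((k + 8 : ℕ):ℝ) + 1) * (3 * π) / 8
        = (2 * (k:ℝ) + 1) * (3 * π) / 8 + 2 * π + 2 * π + 2 * π by push_cast; ring,
      show (2 * ((k + 8 : ℕ):ℝ) + 1) * π / 8 = (2 * (k:ℝ) + 1) * π / 8 + 2 * π by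
        push_cast; ring,
      Real.sin_add_two_pi, Real.sin_add_two_pi, Real.sin_add_two_pi, Real.sin_add_two_pi]

lemma B₂_mul_add (m r : ℕ) : B₂ (8 * m + r) = B₂ r := by
  induction m with
  | zero => simp
  | succ n ih => rw [show 8 * (n + 1) + r = 8 * n + r + 8 by ring, B₂_add_eight, ih]

lemma B₂_vanish {k : ℕ} (h : k % 4 = 1 ∨ k % 4 = 2) : B₂ k = 0 := by
  have h8 : k % 8 = 1 ∨ k % 8 = 2 ∨ k % 8 = 5 ∨ k % 8 = 6 := by omega
  have hk : 8 * (k / 8) + k % 8 = k := Nat.div_add_mod k 8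
  rcases h8 with h | h | h | h <;>
    rw [← hk, h, B₂_mul_add] <;>
    first
      | exact B₂_one | exact B₂_two | exact B₂_five | exact B₂_six

/-- The indexing bijection onto the support. -/
def ff : ℤ → ℕ := fun j => if 0 < j then (4 * j - 1).toNat else (-(4 * j)).toNat

lemma ff_inj : Function.Injective ff := by
  intro a b h
  unfold ff at h
  split_ifs at h <;> omega

lemma term_eq (q : ℂ) (j : ℤ) :
    (-1) ^ (ff j) * (B₂ (ff j) : ℂ) * q ^ (ff j * (ff j + 1) / 2) =
      2 * (Real.sqrt 2 : ℂ) * ((-1) ^ j * q ^ (8 * j ^ 2 - 2 * j)) := by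
  rcases lt_or_ge 0 j with hj | hj
  · obtain ⟨n, rfl⟩ : ∃ n : ℕ, j = (n : ℤ) + 1 := ⟨(j - 1).toNat, by omega⟩
    have hf : ff ((n : ℤ) + 1) = 4 * n + 3 := by unfold ff; split_ifs <;> omega
    have he : (4 * n + 3) * ((4 * n + 3) + 1) / 2 = 8 * n * n + 14 * n + 6 := by
      rw [show (4 * n + 3) * ((4 * n + 3) + 1) = 2 * (8 * n * n + 14 * n + 6) by ring]
      exact Nat.mul_div_cancel_left _ (by norm_num)
    have hz : q ^ (8 * ((n : ℤ) + 1) ^ 2 - 2 * ((n : ℤ) + 1))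
        = q ^ ((8 * n * n + 14 * n + 6 : ℕ)) := by
      rw [show 8 * ((n : ℤ) + 1) ^ 2 - 2 * ((n : ℤ) + 1)
            = ((8 * n * n + 14 * n + 6 : ℕ) : ℤ) by push_cast; ring, zpow_natCast]
    rw [hf, he, hz, show ((n : ℤ) + 1) = ((n + 1 : ℕ) : ℤ) by push_cast; ring, zpow_natCast]
    rcases Nat.even_or_odd n with ⟨m, hm⟩ | ⟨m, hm⟩ <;> subst hm
    · have o1 : Odd (8 * m + 3) := ⟨4 * m + 1, by ring⟩
      have o2 : Odd (m + m + 1) := ⟨m, by ring⟩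
      rw [show 4 * (m + m) + 3 = 8 * m + 3 by ring, B₂_mul_add, B₂_three,
          o1.neg_one_pow, o2.neg_one_pow]
      push_cast; ring
    · have o1 : Odd (8 * m + 7) := ⟨4 * m + 3, by ring⟩
      have o2 : Even (2 * m + 1 + 1) := ⟨m + 1, by ring⟩
      rw [show 4 * (2 * m + 1) + 3 = 8 * m + 7 by ring, B₂_mul_add, B₂_seven,
          o1.neg_one_pow, o2.neg_one_pow]
      push_cast; ring
  · obtain ⟨n, rfl⟩ : ∃ n : ℕ, j = -(n : ℤ) := ⟨(-j).toNat, by omega⟩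
    have hf : ff (-(n : ℤ)) = 4 * n := by unfold ff; split_ifs <;> omega
    have he : (4 * n) * ((4 * n) + 1) / 2 = 8 * n * n + 2 * n := by
      rw [show (4 * n) * ((4 * n) + 1) = 2 * (8 * n * n + 2 * n) by ring]
      exact Nat.mul_div_cancel_left _ (by norm_num)
    have hz : q ^ (8 * (-(n : ℤ)) ^ 2 - 2 * (-(n : ℤ)))
        = q ^ ((8 * n * n + 2 * n : ℕ)) := by
      rw [show 8 * (-(n : ℤ)) ^ 2 - 2 * (-(n : ℤ))
            = ((8 * n * n + 2 * n : ℕ) : ℤ) by push_cast; ring, zpow_natCast]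
    rw [hf, he, hz, zpow_neg, zpow_natCast]
    rcases Nat.even_or_odd n with ⟨m, hm⟩ | ⟨m, hm⟩ <;> subst hm
    · have o1 : Even (8 * m + 0) := ⟨4 * m, by ring⟩
      have o2 : Even (m + m) := ⟨m, by ring⟩
      rw [show 4 * (m + m) = 8 * m + 0 by ring, B₂_mul_add, B₂_zero,
          o1.neg_one_pow, o2.neg_one_pow, inv_one]
      push_cast; ring
    · have o1 : Even (8 * m + 4) := ⟨4 * m + 2, by ring⟩
      have o2 : Odd (2 * m + 1) := ⟨m, by ring⟩
      rw [show 4 * (2 * m + 1) = 8 * m + 4 by ring, B₂_mul_add, B₂_four,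
          o1.neg_one_pow, o2.neg_one_pow, inv_neg_one]
      push_cast; ring

theorem stmt_11 (q : ℂ) (hq : ‖q‖ < 1) :
    ∑' k : ℕ, (-1) ^ k * (B₂ k : ℂ) * q ^ (k * (k + 1) / 2) =
      2 * (Real.sqrt 2 : ℂ) * ∑' j : ℤ, (-1) ^ j * q ^ (8 * j ^ 2 - 2 * j) := by
  have hsupp : Function.support
      (fun k : ℕ => (-1) ^ k * (B₂ k : ℂ) * q ^ (k * (k + 1) / 2)) ⊆ Set.range ff := by
    intro k hk
    rcases (by omega : k % 4 = 0 ∨ k % 4 = 1 ∨ k % 4 = 2 ∨ k % 4 = 3) with h | h | h | h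
    · exact ⟨-(k / 4 : ℤ), by unfold ff; split_ifs <;> omega⟩
    · exact absurd (by simp [B₂_vanish (Or.inl h)]) hk
    · exact absurd (by simp [B₂_vanish (Or.inr h)]) hk
    · exact ⟨((k : ℤ) + 1) / 4, by unfold ff; split_ifs <;> omega⟩
  calc ∑' k : ℕ, (-1) ^ k * (B₂ k : ℂ) * q ^ (k * (k + 1) / 2)
      = ∑' j : ℤ, (-1) ^ (ff j) * (B₂ (ff j) : ℂ) * q ^ (ff j * (ff j + 1) / 2) :=
        (ff_inj.tsum_eq hsupp).symm
    _ = ∑' j : ℤ, 2 * (Real.sqrt 2 : ℂ) * ((-1) ^ j * q ^ (8 * j ^ 2 - 2 * j)) :=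
        tsum_congr (term_eq q)
    _ = 2 * (Real.sqrt 2 : ℂ) * ∑' j : ℤ, (-1) ^ j * q ^ (8 * j ^ 2 - 2 * j) := tsum_mul_left
end
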